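/- Let ρ ≥ 2 and m ≥ 0, and let MULT_m := {(a,b,c) ∈ ℤ³ : 0 ≤ a < ρ^m, 0 ≤ b < ρ^m, and a·b = c}. Every nondeterministic word automaton over the alphabet Σ³ whose accepted language represents MULT_m has at least ρ^m states. -/

import Mathlib

namespace Presburger

/-- A letter of the alphabet `Σ^r`, where `Σ = {0, …, ρ-1}`. -/
abbrev Letter (ρ r : ℕ) := Fin r → Fin ρ

/-- The natural number encoded by a word over `Σ` (most significant digit first). -/
def natVal (ρ : ℕ) (w : List ℕ) : ℕ := w.foldl (fun acc b => ρ * acc + b) 0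

/-- The integer encoded by a nonempty word over `Σ` (ρ's complement,
most significant digit first); the empty word gets the junk value `0`. -/
def intVal (ρ : ℕ) : List ℕ → ℤ
  | [] => 0
  | b :: u => (natVal ρ u : ℤ) - (if b = 0 then 0 else (ρ : ℤ) ^ u.length)

/-- The tuple of natural numbers encoded track-wise by a word over `Σ^r` (as integers). -/
def natVec (ρ r : ℕ) (w : List (Letter ρ r)) : Fin r → ℤ :=
  fun i => (natVal ρ (w.map fun b => (b i : ℕ)) : ℤ)

/-- The tuple of integers encoded track-wise by a nonempty word over `Σ^r`. -/
def intVec (ρ r : ℕ) (w : List (Letter ρ r)) : Fin r → ℤ :=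
  fun i => intVal ρ (w.map fun b => (b i : ℕ))

/-- A language over `Σ^r` represents a set `U ⊆ ℤ^r` if it consists exactly of the
nonempty words encoding a member of `U`. -/
def Represents (ρ r : ℕ) (L : Language (Letter ρ r)) (U : Set (Fin r → ℤ)) : Prop :=
  ∀ w : List (Letter ρ r), w ∈ L ↔ (w ≠ [] ∧ intVec ρ r w ∈ U)

/-- A DFA represents `U ⊆ ℤ^r` if its accepted language does. -/
def DFARepresents (ρ r : ℕ) {σ : Type*} (M : DFA (Letter ρ r) σ) (U : Set (Fin r → ℤ)) : Prop :=
  Represents ρ r M.accepts U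

/-- Value of the homogeneous term with coefficients `k` at the point `a`. -/
def tval {r : ℕ} (k : Fin r → ℤ) (a : Fin r → ℤ) : ℤ := ∑ i, k i * a i

/-- A homogeneous term is `0` or has all its coefficients nonzero. -/
def Homog {r : ℕ} (k : Fin r → ℤ) : Prop := k = 0 ∨ ∀ i, k i ≠ 0

/-- `σ(b)`: componentwise `0` if the digit is `0` and `-1` otherwise. -/
def sgnLetter {ρ r : ℕ} (b : Letter ρ r) : Fin r → ℤ :=
  fun i => if (b i : ℕ) = 0 then 0 else -1

/-- The letter `b` viewed as a tuple of integers. -/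
def letterInt {ρ r : ℕ} (b : Letter ρ r) : Fin r → ℤ := fun i => ((b i : ℕ) : ℤ)

/-- `‖t‖⁺`: the sum of the positive coefficients of `t`. -/
def posNorm {r : ℕ} (k : Fin r → ℤ) : ℤ := ∑ i, max (k i) 0

/-- `‖t‖⁻`: the sum of the absolute values of the negative coefficients of `t`. -/
def negNorm {r : ℕ} (k : Fin r → ℤ) : ℤ := ∑ i, max (-k i) 0

/-- `gcd(t)`: the gcd of the absolute values of the coefficients of `t`. -/
def gcdT {r : ℕ} (k : Fin r → ℤ) : ℕ := Finset.univ.gcd fun i => (k i).natAbs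

/-- The transition function `η` of the infinite-state automaton for `t`,
restricted to the integer states: `η(q, b) = ρ·q + t[b]`. -/
def etaStep (ρ : ℕ) {r : ℕ} (k : Fin r → ℤ) (q : ℤ) (b : Letter ρ r) : ℤ :=
  ρ * q + tval k (letterInt b)

/-- The transition of `η` out of the initial state: `η(q_I, b) = t[σ(b)]`. -/
def etaInit (ρ : ℕ) {r : ℕ} (k : Fin r → ℤ) (b : Letter ρ r) : ℤ :=
  tval k (sgnLetter b)

/-- A state `q` is small (for `t ⋈ c`) if `q < min{c, -‖t‖⁺}`. -/
def IsSmall {r : ℕ} (k : Fin r → ℤ) (c q : ℤ) : Prop := q < min c (-posNorm k)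

/-- A state `q` is large (for `t ⋈ c`) if `q > max{c, ‖t‖⁻}`. -/
def IsLarge {r : ℕ} (k : Fin r → ℤ) (c q : ℤ) : Prop := max c (negNorm k) < q

/-- The six relations `=, ≠, <, ≤, >, ≥` on `ℤ`. -/
def rel6 : Set (ℤ → ℤ → Prop) :=
  {fun x y => x = y, fun x y => x ≠ y, fun x y => x < y,
   fun x y => x ≤ y, fun x y => x > y, fun x y => x ≥ y}

/-- Clamp an integer into the state set `{m, …, n}`; yields `none` (the initial state)
only in the degenerate case `m > n`, which never occurs for small `m` and large `n`. -/
noncomputable def clampSt (m n x : ℤ) : Option ↥(Finset.Icc m n) :=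
  if h : max m (min n x) ∈ Finset.Icc m n then some ⟨max m (min n x), h⟩ else none

/-- The DFA `A^{t ⋈ c}_{(m,n)}` for the (in)equation `t ⋈ c`: states are
`q_I = none` together with `{m, …, n}`, transitions clamp `η` to `[m, n]`, and the
accepting states are the integer states `q` with `q ⋈ c`. -/
noncomputable def ineqDFA (ρ : ℕ) {r : ℕ} (k : Fin r → ℤ) (m n : ℤ) (rel : ℤ → ℤ → Prop) (c : ℤ) :
    DFA (Letter ρ r) (Option ↥(Finset.Icc m n)) where
  step q b :=
    match q with
    | none => clampSt m n (etaInit ρ k b)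
    | some z => clampSt m n (etaStep ρ k z.val b)
  start := none
  accept := {q | ∃ z : ↥(Finset.Icc m n), q = some z ∧ rel z.val c}

/-- Two states of a DFA are equivalent if they accept exactly the same words. -/
def stEquiv {α : Type*} {σ : Type*} (M : DFA α σ) (p q : σ) : Prop :=
  ∀ w : List α, (M.evalFrom p w ∈ M.accept ↔ M.evalFrom q w ∈ M.accept)

end Presburger

namespace Presburger

/-- An NFA represents `U ⊆ ℤ^r` if its accepted language does. -/
def NFARepresents (ρ r : ℕ) {σ : Type*} (M : NFA (Letter ρ r) σ)
    (U : Set (Fin r → ℤ)) : Prop :=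
  Represents ρ r M.accepts U

-- ### auxiliary numeric lemmas

theorem foldl_natVal (ρ : ℕ) (w : List ℕ) (a : ℕ) :
    w.foldl (fun acc b => ρ * acc + b) a = a * ρ ^ w.length + natVal ρ w := by
  induction w generalizing a with
  | nil => simp [natVal]
  | cons b u ih =>
    simp only [List.foldl_cons, List.length_cons, natVal]
    rw [ih (ρ * a + b), ih (ρ * 0 + b)]
    ring

theorem natVal_append (ρ : ℕ) (u v : List ℕ) :
    natVal ρ (u ++ v) = natVal ρ u * ρ ^ v.length + natVal ρ v := by
  unfold natVal
  rw [List.foldl_append, foldl_natVal]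
  rfl

/-- trackwise word of length `m` encoding three naturals, big-endian. -/
def tW (ρ : ℕ) (hρ : 0 < ρ) : ℕ → (Fin 3 → ℕ) → List (Letter ρ 3)
  | 0, _ => []
  | m+1, n => tW ρ hρ m (fun i => n i / ρ) ++ [fun i => ⟨n i % ρ, Nat.mod_lt _ hρ⟩]

theorem tW_length (ρ : ℕ) (hρ : 0 < ρ) (m : ℕ) (n : Fin 3 → ℕ) :
    (tW ρ hρ m n).length = m := by
  induction m generalizing n with
  | zero => simp [tW]
  | succ m ih => simp [tW, ih]

theorem natVal_tW (ρ : ℕ) (hρ : 0 < ρ) (m : ℕ) (n : Fin 3 → ℕ) (i : Fin 3)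
    (hn : n i < ρ ^ m) :
    natVal ρ ((tW ρ hρ m n).map fun b => (b i : ℕ)) = n i := by
  induction m generalizing n with
  | zero => simp only [pow_zero] at hn; simp [tW, natVal]; omega
  | succ m ih =>
    simp only [tW, List.map_append, List.map_cons, List.map_nil]
    rw [natVal_append]
    have h1 : n i / ρ < ρ ^ m := by
      rw [Nat.div_lt_iff_lt_mul hρ]
      calc n i < ρ ^ (m+1) := hn
        _ = ρ ^ m * ρ := by ring
    rw [ih (fun i => n i / ρ) h1]
    simp only [natVal, List.foldl_cons, List.foldl_nil, List.length_cons,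
      List.length_nil, pow_one, mul_zero, zero_add]
    conv_rhs => rw [← Nat.div_add_mod (n i) ρ]
    ring

-- ### NFA evalFrom lemmas

theorem nfa_evalFrom_append {α σ : Type*} (M : NFA α σ) (S : Set σ) (x y : List α) :
    M.evalFrom S (x ++ y) = M.evalFrom (M.evalFrom S x) y := by
  simp [NFA.evalFrom, List.foldl_append]

theorem nfa_mem_evalFrom_iff {α σ : Type*} (M : NFA α σ) :
    ∀ (w : List α) (S : Set σ) (f : σ),
      f ∈ M.evalFrom S w ↔ ∃ q ∈ S, f ∈ M.evalFrom ({q} : Set σ) w := by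
  intro w
  induction w with
  | nil => intro S f; simp [NFA.evalFrom]
  | cons a w ih =>
    intro S f
    have h1 : ∀ T : Set σ, M.evalFrom T (a :: w) = M.evalFrom (M.stepSet T a) w :=
      fun T => rfl
    rw [h1, ih]
    constructor
    · rintro ⟨p, hp, hf⟩
      rw [NFA.mem_stepSet] at hp
      obtain ⟨q, hq, hpq⟩ := hp
      refine ⟨q, hq, ?_⟩
      rw [h1, ih]
      refine ⟨p, ?_, hf⟩
      rw [NFA.mem_stepSet]
      exact ⟨q, rfl, hpq⟩
    · rintro ⟨q, hq, hf⟩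
      rw [h1, ih] at hf
      obtain ⟨p, hp, hf⟩ := hf
      rw [NFA.mem_stepSet] at hp
      obtain ⟨q', hq', hpq⟩ := hp
      refine ⟨p, ?_, hf⟩
      rw [NFA.mem_stepSet]
      exact ⟨q, hq, (Set.mem_singleton_iff.mp hq') ▸ hpq⟩

-- ### the fooling words

def zLet (ρ : ℕ) (hρ : 0 < ρ) : Letter ρ 3 := fun _ => ⟨0, hρ⟩

def Pfx (ρ : ℕ) (hρ : 0 < ρ) (m j : ℕ) : List (Letter ρ 3) :=
  zLet ρ hρ ::
    (if j = 0 then tW ρ hρ m ![0, 0, 0] ++ tW ρ hρ m ![1, ρ^m - 1, ρ^m - 1]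
     else tW ρ hρ m ![0, 0, j - 1])

def Sfx (ρ : ℕ) (hρ : 0 < ρ) (m j : ℕ) : List (Letter ρ 3) :=
  if j = 0 then [] else tW ρ hρ m ![j, ρ^m - 1, ρ^m - j]

theorem intVec_zcons (ρ : ℕ) (hρ : 0 < ρ) (w : List (Letter ρ 3)) (i : Fin 3) :
    intVec ρ 3 (zLet ρ hρ :: w) i = (natVal ρ (w.map fun b => (b i : ℕ)) : ℤ) := by
  simp [intVec, intVal, zLet]

theorem val_pos_pos (ρ : ℕ) (hρ : 0 < ρ) (m j k : ℕ)
    (hj0 : j ≠ 0) (hk0 : k ≠ 0) (hj : j < ρ^m) (hk : k < ρ^m) :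
    intVec ρ 3 (Pfx ρ hρ m j ++ Sfx ρ hρ m k) 0 = (k : ℤ) ∧
    intVec ρ 3 (Pfx ρ hρ m j ++ Sfx ρ hρ m k) 1 = ((ρ^m - 1 : ℕ) : ℤ) ∧
    intVec ρ 3 (Pfx ρ hρ m j ++ Sfx ρ hρ m k) 2 =
      (((j - 1) * ρ^m + (ρ^m - k) : ℕ) : ℤ) := by
  have hword : Pfx ρ hρ m j ++ Sfx ρ hρ m k =
      zLet ρ hρ :: (tW ρ hρ m ![0, 0, j - 1] ++ tW ρ hρ m ![k, ρ^m - 1, ρ^m - k]) := by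
    simp [Pfx, Sfx, hj0, hk0]
  rw [hword]
  have hlen : ∀ n : Fin 3 → ℕ,
      ((tW ρ hρ m n).map fun b => ((b (2:Fin 3) : ℕ))).length = m := by
    intro n; rw [List.length_map, tW_length]
  refine ⟨?_, ?_, ?_⟩ <;>
  · rw [intVec_zcons, List.map_append, natVal_append, List.length_map, tW_length,
      natVal_tW, natVal_tW] <;>
    simp [Matrix.cons_val_zero, Matrix.cons_val_one, Matrix.head_cons] <;>
    omega

theorem val_zero_pos (ρ : ℕ) (hρ : 0 < ρ) (m k : ℕ) (hk0 : k ≠ 0) (hk : k < ρ^m)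
    (hR : 1 < ρ^m) :
    intVec ρ 3 (Pfx ρ hρ m 0 ++ Sfx ρ hρ m k) 0 = ((ρ^m + k : ℕ) : ℤ) := by
  have hword : Pfx ρ hρ m 0 ++ Sfx ρ hρ m k =
      zLet ρ hρ :: ((tW ρ hρ m ![0,0,0] ++ tW ρ hρ m ![1, ρ^m - 1, ρ^m - 1]) ++
        tW ρ hρ m ![k, ρ^m - 1, ρ^m - k]) := by
    simp [Pfx, Sfx, hk0]
  rw [hword, intVec_zcons]
  rw [List.map_append, natVal_append, List.map_append, natVal_append,
    List.length_map, tW_length, List.length_map, tW_length,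
    natVal_tW, natVal_tW, natVal_tW] <;>
  simp [Matrix.cons_val_zero] <;> omega

theorem val_zero_zero (ρ : ℕ) (hρ : 0 < ρ) (m : ℕ) (hR : 1 < ρ^m) :
    intVec ρ 3 (Pfx ρ hρ m 0 ++ Sfx ρ hρ m 0) 0 = (1 : ℤ) ∧
    intVec ρ 3 (Pfx ρ hρ m 0 ++ Sfx ρ hρ m 0) 1 = ((ρ^m - 1 : ℕ) : ℤ) ∧
    intVec ρ 3 (Pfx ρ hρ m 0 ++ Sfx ρ hρ m 0) 2 = ((ρ^m - 1 : ℕ) : ℤ) := by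
  have hword : Pfx ρ hρ m 0 ++ Sfx ρ hρ m 0 =
      zLet ρ hρ :: (tW ρ hρ m ![0,0,0] ++ tW ρ hρ m ![1, ρ^m - 1, ρ^m - 1]) := by
    simp [Pfx, Sfx]
  rw [hword]
  refine ⟨?_, ?_, ?_⟩ <;>
  · rw [intVec_zcons, List.map_append, natVal_append, List.length_map, tW_length,
      natVal_tW, natVal_tW] <;>
    simp [Matrix.cons_val_zero, Matrix.cons_val_one, Matrix.head_cons] <;>
    omega

/-- Remark after Theorem `worst_case`.
Every nondeterministic word automaton over the alphabet `Σ³` representing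
`MULT_m = {(a,b,c) ∈ ℤ³ : 0 ≤ a < ρ^m, 0 ≤ b < ρ^m, a·b = c}` has at least
`ρ^m` states. -/
theorem stmt_19 (ρ : ℕ) (hρ : 2 ≤ ρ) (m : ℕ)
    (σ : Type*) [Fintype σ] (M : NFA (Letter ρ 3) σ)
    (hM : NFARepresents ρ 3 M
      {a | 0 ≤ a 0 ∧ a 0 < (ρ : ℤ) ^ m ∧ 0 ≤ a 1 ∧ a 1 < (ρ : ℤ) ^ m ∧
           a 0 * a 1 = a 2}) :
    ρ ^ m ≤ Fintype.card σ := by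
  have hρ0 : 0 < ρ := by omega
  have hMr : ∀ w : List (Letter ρ 3), w ∈ M.accepts ↔
      (w ≠ [] ∧ intVec ρ 3 w ∈ {a : Fin 3 → ℤ | 0 ≤ a 0 ∧ a 0 < (ρ:ℤ)^m ∧ 0 ≤ a 1 ∧
        a 1 < (ρ:ℤ)^m ∧ a 0 * a 1 = a 2}) := hM
  by_cases hm : m = 0
  · subst hm
    have hw : [zLet ρ hρ0] ∈ M.accepts := by
      rw [hMr]
      refine ⟨by simp, ?_⟩
      have hvec : ∀ i : Fin 3, intVec ρ 3 [zLet ρ hρ0] i = 0 := by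
        intro i; simp [intVec, intVal, natVal, zLet]
      simp only [Set.mem_setOf_eq, hvec]
      norm_num
    rw [NFA.mem_accepts] at hw
    obtain ⟨f, -, -⟩ := hw
    have : 0 < Fintype.card σ := Fintype.card_pos_iff.mpr ⟨f⟩
    rw [pow_zero]; exact this
  · set R : ℕ := ρ ^ m with hRdef
    have hR1 : 1 < R := lt_of_lt_of_le hρ (Nat.le_self_pow hm ρ)
    have hcast : ((ρ:ℤ))^m = ((R : ℕ) : ℤ) := by rw [hRdef]; push_cast; ring
    -- diagonal words accepted
    have hdiag : ∀ j : Fin R, Pfx ρ hρ0 m (j:ℕ) ++ Sfx ρ hρ0 m (j:ℕ) ∈ M.accepts := by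
      intro j
      rw [hMr]
      refine ⟨by simp [Pfx], ?_⟩
      by_cases hj0 : (j:ℕ) = 0
      · rw [hj0]
        obtain ⟨h0, h1, h2⟩ := val_zero_zero ρ hρ0 m hR1
        rw [← hRdef] at h1 h2
        simp only [Set.mem_setOf_eq, h0, h1, h2, hcast]
        refine ⟨by norm_num, ?_, ?_, ?_, ?_⟩ <;> [skip; skip; skip; rw [one_mul]] <;> omega
      · have hjlt : (j:ℕ) < R := j.isLt
        obtain ⟨h0, h1, h2⟩ := val_pos_pos ρ hρ0 m (j:ℕ) (j:ℕ) hj0 hj0 hjlt hjlt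
        rw [← hRdef] at h1 h2
        simp only [Set.mem_setOf_eq, h0, h1, h2, hcast]
        have e1 : (((j:ℕ) - 1 : ℕ) : ℤ) = ((j:ℕ) : ℤ) - 1 := by omega
        have e2 : ((R - (j:ℕ) : ℕ) : ℤ) = (R : ℤ) - ((j:ℕ) : ℤ) := by omega
        have e3 : ((R - 1 : ℕ) : ℤ) = (R : ℤ) - 1 := by omega
        refine ⟨?_, ?_, ?_, ?_, ?_⟩
        · omega
        · omega
        · omega
        · omega
        · push_cast
          rw [e1, e2, e3]
          ring
    -- existence of fooling states
    have hex : ∀ j : Fin R, ∃ q : σ, q ∈ M.evalFrom M.start (Pfx ρ hρ0 m (j:ℕ)) ∧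
        ∃ f ∈ M.accept, f ∈ M.evalFrom ({q} : Set σ) (Sfx ρ hρ0 m (j:ℕ)) := by
      intro j
      have h := hdiag j
      rw [NFA.mem_accepts] at h
      obtain ⟨f, hf, hfin⟩ := h
      rw [nfa_evalFrom_append, nfa_mem_evalFrom_iff] at hfin
      obtain ⟨q, hq, hq2⟩ := hfin
      exact ⟨q, hq, f, hf, hq2⟩
    choose F hF1 hF2 using hex
    have hcrossAcc : ∀ j k : Fin R, F j = F k →
        Pfx ρ hρ0 m (j:ℕ) ++ Sfx ρ hρ0 m (k:ℕ) ∈ M.accepts := by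
      intro j k hjk
      obtain ⟨f, hf, hf2⟩ := hF2 k
      rw [NFA.mem_accepts]
      refine ⟨f, hf, ?_⟩
      rw [nfa_evalFrom_append, nfa_mem_evalFrom_iff]
      exact ⟨F j, hF1 j, hjk ▸ hf2⟩
    have hinj : Function.Injective F := by
      intro j k hjk
      have h1 := hcrossAcc j k hjk
      have h2 := hcrossAcc k j hjk.symm
      rw [hMr] at h1 h2
      obtain ⟨-, hu1⟩ := h1
      obtain ⟨-, hu2⟩ := h2
      simp only [Set.mem_setOf_eq] at hu1 hu2
      by_cases hj0 : (j:ℕ) = 0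
      · by_cases hk0 : (k:ℕ) = 0
        · exact Fin.ext (by omega)
        · exfalso
          have h0 := val_zero_pos ρ hρ0 m (k:ℕ) hk0 k.isLt hR1
          rw [← hRdef] at h0
          rw [hj0] at hu1
          rw [h0, hcast] at hu1
          obtain ⟨-, hlt, -⟩ := hu1
          omega
      · by_cases hk0 : (k:ℕ) = 0
        · exfalso
          have h0 := val_zero_pos ρ hρ0 m (j:ℕ) hj0 j.isLt hR1
          rw [← hRdef] at h0
          rw [hk0] at hu2
          rw [h0, hcast] at hu2
          obtain ⟨-, hlt, -⟩ := hu2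
          omega
        · obtain ⟨q0, q1, q2⟩ := val_pos_pos ρ hρ0 m (j:ℕ) (k:ℕ) hj0 hk0 j.isLt k.isLt
          rw [← hRdef] at q1 q2
          rw [q0, q1, q2] at hu1
          obtain ⟨-, -, -, -, heq⟩ := hu1
          have e1 : (((j:ℕ) - 1 : ℕ) : ℤ) = ((j:ℕ) : ℤ) - 1 := by omega
          have e2 : ((R - (k:ℕ) : ℕ) : ℤ) = (R : ℤ) - ((k:ℕ) : ℤ) := by
            have := k.isLt; omega
          have e3 : ((R - 1 : ℕ) : ℤ) = (R : ℤ) - 1 := by omega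
          push_cast at heq
          rw [e1, e2, e3] at heq
          have hmul : ((k:ℕ) : ℤ) * (R : ℤ) = ((j:ℕ) : ℤ) * (R : ℤ) := by ring_nf at heq ⊢; linarith
          have hRne : ((R : ℕ) : ℤ) ≠ 0 := by omega
          have : ((k:ℕ) : ℤ) = ((j:ℕ) : ℤ) := mul_right_cancel₀ hRne hmul
          exact Fin.ext (show (j:ℕ) = (k:ℕ) by omega)
    have hcard := Fintype.card_le_of_injective F hinj
    simpa [Fintype.card_fin, hRdef] using hcard

end Presburger
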